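/- Let F be a field, x_1,...,x_n, y_1,...,y_n nonzero elements of F with (x_i) algebraically independent, B an n×n integer matrix, d_k a positive integer, and Z_k(u) = Σ_{s=0}^{d_k} z_{k,s} u^s a polynomial with nonzero coefficients in F and z_{k,0} = z_{k,d_k} = 1. Set ŷ_k = y_k ∏_i x_i^{b_{ik}} and define x'_k by x'_k x_k = (∏_i x_i^{[-b_{ik}]_+})^{d_k} · Z_k(ŷ_k) / N_k for any fixed nonzero scalar N_k, keeping x'_i = x_i for i ≠ k, y'_k = y_k^{-1}, B' = μ_k^D(B), Z'_k = \bar Z_k (reversed coefficients), and N'_k = N_k / y_k^{d_k} (corresponding to \bar Z_k|_P(y_k^{-1})). Then applying the same exchange relation to the new seed returns x''_k = x_k. That is, the generalized exchange relation is involutive. -/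

import Mathlib

/-- The generalized exchange relation is involutive: applying the exchange
relation in direction `k` to the mutated seed (with reversed exchange
polynomial, mutated exchange matrix, and normalization `N'_k = N_k / y_k^{d_k}`)
returns the original cluster variable `x_k`. -/
theorem gen_exchange_involutive {n : ℕ} {F : Type*} [Field F]
    (x y : Fin n → F) (hx : ∀ i, x i ≠ 0) (hy : ∀ i, y i ≠ 0)
    (hxalg : AlgebraicIndependent ℤ x)
    (B : Matrix (Fin n) (Fin n) ℤ) (k : Fin n) (hBkk : B k k = 0)
    (dk : ℕ) (hdk : 0 < dk)
    (z : ℕ → F) (hz : ∀ s, z s ≠ 0) (hz0 : z 0 = 1) (hzd : z dk = 1)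
    (Nk : F) (hNk : Nk ≠ 0) :
    let pp : ℤ → ℤ := fun t => max t 0
    -- evaluation of the exchange polynomial with coefficients `w`
    let Zev : (ℕ → F) → F → F := fun w u => ∑ s ∈ Finset.range (dk + 1), w s * u ^ s
    -- `ŷ_k = y_k ∏ᵢ x_i^{b_{ik}}`
    let yhk : F := y k * ∏ i, x i ^ (B i k)
    Zev z yhk ≠ 0 →
    -- mutated cluster: `x'_k x_k = (∏ᵢ x_i^{[-b_{ik}]₊})^{d_k} Z_k(ŷ_k)/N_k`
    let x' : Fin n → F := fun i => if i = k then
        ((∏ i, x i ^ pp (-(B i k))) ^ dk * Zev z yhk / Nk) / x k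
      else x i
    -- reversed exchange polynomial coefficients
    let z' : ℕ → F := fun s => z (dk - s)
    -- new normalization, corresponding to `Z̄_k|_P(y_k⁻¹) = y_k^{-d_k} Z_k|_P(y_k)`
    let Nk' : F := Nk / y k ^ (dk : ℤ)
    -- mutated exchange matrix `μ_k^D(B)`
    let B' : Matrix (Fin n) (Fin n) ℤ := fun i j => if i = k ∨ j = k then -B i j
      else B i j + pp (B i k) * (dk : ℤ) * B k j + B i k * (dk : ℤ) * pp (-(B k j))
    -- `ŷ'_k = y'_k ∏ᵢ (x'_i)^{b'_{ik}}` with `y'_k = y_k⁻¹`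
    let yhk' : F := (y k)⁻¹ * ∏ i, x' i ^ (B' i k)
    -- second application of the exchange relation
    let x'' : F := ((∏ i, x' i ^ pp (-(B' i k))) ^ dk * Zev z' yhk' / Nk') / x' k
    x'' = x k := by
  intro pp Zev yhk hZ x' z' Nk' B' yhk' x''
  have hR : (∏ i, x i ^ (B i k)) ≠ 0 :=
    Finset.prod_ne_zero_iff.mpr fun i _ => zpow_ne_zero _ (hx i)
  have hP : (∏ i, x i ^ pp (-(B i k))) ≠ 0 :=
    Finset.prod_ne_zero_iff.mpr fun i _ => zpow_ne_zero _ (hx i)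
  have hyh : yhk ≠ 0 := mul_ne_zero (hy k) hR
  have hxk' : x' k = ((∏ i, x i ^ pp (-(B i k))) ^ dk * Zev z yhk / Nk) / x k := by
    simp [x']
  have hprod1 : (∏ i, x' i ^ (B' i k)) = (∏ i, x i ^ (B i k))⁻¹ := by
    rw [← Finset.prod_inv_distrib]
    apply Finset.prod_congr rfl
    intro i _
    by_cases h : i = k
    · subst h
      simp [B', hBkk]
    · have hB : B' i k = -(B i k) := by simp [B']
      simp only [x', if_neg h, hB, zpow_neg]
  have hyhk' : yhk' = yhk⁻¹ := by
    show (y k)⁻¹ * (∏ i, x' i ^ (B' i k)) = yhk⁻¹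
    rw [hprod1, ← mul_inv]
  have hprod2 : (∏ i, x' i ^ pp (-(B' i k))) = ∏ i, x i ^ pp (B i k) := by
    apply Finset.prod_congr rfl
    intro i _
    by_cases h : i = k
    · subst h
      have h1 : pp (-(B' i i)) = 0 := by simp [B', hBkk, pp]
      have h2 : pp (B i i) = 0 := by simp [hBkk, pp]
      rw [h1, h2]
      simp
    · have h1 : B' i k = -(B i k) := by simp [B']
      simp only [x', if_neg h, h1, neg_neg]
  have hZrev : Zev z' (yhk⁻¹) = (yhk ^ dk)⁻¹ * Zev z yhk := by
    have key : (yhk ^ dk) * Zev z' (yhk⁻¹) = Zev z yhk := by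
      show (yhk ^ dk) * ∑ s ∈ Finset.range (dk + 1), z (dk - s) * (yhk⁻¹) ^ s
          = ∑ s ∈ Finset.range (dk + 1), z s * yhk ^ s
      rw [Finset.mul_sum, ← Finset.sum_range_reflect (fun s => z s * yhk ^ s) (dk + 1)]
      apply Finset.sum_congr rfl
      intro s hs
      have hsle : s ≤ dk := Nat.lt_succ_iff.mp (Finset.mem_range.mp hs)
      have hidx : dk + 1 - 1 - s = dk - s := by omega
      rw [hidx, inv_pow, pow_sub₀ _ hyh hsle]
      ring
    have hpow : (yhk : F) ^ dk ≠ 0 := pow_ne_zero _ hyh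
    field_simp at key ⊢
    linear_combination key
  have hQPR : (∏ i, x i ^ pp (B i k))
      = (∏ i, x i ^ pp (-(B i k))) * ∏ i, x i ^ (B i k) := by
    rw [← Finset.prod_mul_distrib]
    apply Finset.prod_congr rfl
    intro i _
    rw [← zpow_add₀ (hx i)]
    congr 1
    simp only [pp]
    omega
  show ((∏ i, x' i ^ pp (-(B' i k))) ^ dk * Zev z' yhk' / Nk') / x' k = x k
  rw [hprod2, hyhk', hZrev, hxk', hQPR]
  show ((((∏ i, x i ^ pp (-(B i k))) * ∏ i, x i ^ (B i k)) ^ dk *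
      ((yhk ^ dk)⁻¹ * Zev z yhk)) / (Nk / y k ^ (dk : ℤ))) /
      (((∏ i, x i ^ pp (-(B i k))) ^ dk * Zev z yhk / Nk) / x k) = x k
  rw [zpow_natCast]
  have hyhdef : yhk = y k * ∏ i, x i ^ (B i k) := rfl
  rw [hyhdef]
  field_simp
  have hZ2 : Zev z ((∏ i, x i ^ B i k) * y k) ≠ 0 := by rw [mul_comm]; exact hZ
  field_simp
  have hRy : (∏ i, x i ^ B i k) * y k ≠ 0 := mul_ne_zero hR (hy k)
  rw [div_eq_iff (pow_ne_zero _ hRy)]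
  ring
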